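/- Let N ≥ 2, let f_i, ψ_i : ℝ → ℝ (i = 1,…,N) be smooth, let γ ∈ ℝ, fix base points r*₁,…,r*_N ∈ ℝ, assume γ − f_m(s) ≠ 0 for all m and all s ∈ ℝ, and define μ_γ : ℝ^N → ℝ by μ_γ(r) := exp[Σ_{m=1}^N ∫_{r*_m}^{r_m} ψ'_m(s)/(γ − f_m(s)) ds]. Then at every point r with f_i(r_i) ≠ f_k(r_k), for all i ≠ k: ∂_i∂_k μ_γ = [ψ'_k(r_k) ∂_i μ_γ − ψ'_i(r_i) ∂_k μ_γ] / (f_i(r_i) − f_k(r_k)). -/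

import Mathlib

open Real Set

/-- Partial derivative of `f : (Fin N → ℝ) → ℝ` in the `i`-th coordinate at `r`. -/
noncomputable def pd {N : ℕ} (i : Fin N) (f : (Fin N → ℝ) → ℝ) (r : Fin N → ℝ) : ℝ :=
  deriv (fun s => f (Function.update r i s)) (r i)

/-- The functions `μ_γ(r) = exp[Σ_m ∫_{r*_m}^{r_m} ψ'_m(s)/(γ − f_m(s)) ds]` solve the
Tsarev linear system `∂ᵢ∂_k h = [ψ'_k ∂ᵢ h − ψ'ᵢ ∂_k h]/(fᵢ − f_k)` at every point
where `fᵢ(rᵢ) ≠ f_k(r_k)`. -/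
theorem basic_solutions_of_linear_system
    (N : ℕ) (hN : 2 ≤ N) (f ψ : Fin N → ℝ → ℝ)
    (hf : ∀ i, ContDiff ℝ (⊤ : ℕ∞) (f i)) (hψ : ∀ i, ContDiff ℝ (⊤ : ℕ∞) (ψ i))
    (γ : ℝ) (r₀ : Fin N → ℝ)
    (hγ : ∀ (m : Fin N) (s : ℝ), γ - f m s ≠ 0)
    (μγ : (Fin N → ℝ) → ℝ)
    (hμγ : ∀ rr : Fin N → ℝ,
      μγ rr = Real.exp (∑ m, ∫ s in (r₀ m)..(rr m), deriv (ψ m) s / (γ - f m s))) :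
    ∀ (rr : Fin N → ℝ) (i k : Fin N), i ≠ k → f i (rr i) ≠ f k (rr k) →
      pd i (fun r' => pd k μγ r') rr
        = (deriv (ψ k) (rr k) * pd i μγ rr - deriv (ψ i) (rr i) * pd k μγ rr)
            / (f i (rr i) - f k (rr k)) := by
  -- the integrand
  set g : Fin N → ℝ → ℝ := fun m s => deriv (ψ m) s / (γ - f m s) with hg
  have hgc : ∀ m, Continuous (g m) := by
    intro m
    exact ((hψ m).continuous_deriv (mod_cast le_top)).div
      (continuous_const.sub (hf m).continuous) (hγ m)
  -- key: one-variable derivative of μγ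
  have key : ∀ (rr : Fin N → ℝ) (k : Fin N),
      HasDerivAt (fun s => μγ (Function.update rr k s)) (g k (rr k) * μγ rr) (rr k) := by
    intro rr k
    have hFun : ∀ s : ℝ, μγ (Function.update rr k s)
        = Real.exp ((∫ t in (r₀ k)..s, g k t)
            + ∑ m ∈ Finset.univ.erase k, ∫ t in (r₀ m)..(rr m), g m t) := by
      intro s
      rw [hμγ]
      congr 1
      rw [← Finset.add_sum_erase _ _ (Finset.mem_univ k)]
      congr 1
      · simp [hg]
      · apply Finset.sum_congr rfl
        intro m hm
        rw [Function.update_of_ne (Finset.ne_of_mem_erase hm)]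
    have hF : HasDerivAt (fun s => (∫ t in (r₀ k)..s, g k t)
        + ∑ m ∈ Finset.univ.erase k, ∫ t in (r₀ m)..(rr m), g m t)
        (g k (rr k)) (rr k) := by
      have := intervalIntegral.integral_hasDerivAt_right
        ((hgc k).intervalIntegrable (r₀ k) (rr k))
        ((hgc k).stronglyMeasurableAtFilter _ _)
        (hgc k).continuousAt
      simpa using this.add_const (∑ m ∈ Finset.univ.erase k, ∫ t in (r₀ m)..(rr m), g m t)
    have hE := hF.exp
    have hrr : μγ rr = Real.exp ((∫ t in (r₀ k)..(rr k), g k t)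
        + ∑ m ∈ Finset.univ.erase k, ∫ t in (r₀ m)..(rr m), g m t) := by
      have := hFun (rr k)
      rwa [Function.update_eq_self] at this
    have : HasDerivAt (fun s => μγ (Function.update rr k s))
        (Real.exp ((∫ t in (r₀ k)..(rr k), g k t)
          + ∑ m ∈ Finset.univ.erase k, ∫ t in (r₀ m)..(rr m), g m t) * g k (rr k)) (rr k) := by
      apply HasDerivAt.congr_of_eventuallyEq hE
      filter_upwards with s using hFun s
    rw [← hrr, mul_comm] at this
    exact this
  intro rr i k hik hfik
  have hpdk : ∀ r' : Fin N → ℝ, pd k μγ r' = g k (r' k) * μγ r' := by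
    intro r'; exact (key r' k).deriv
  have hpdi : pd i μγ rr = g i (rr i) * μγ rr := (key rr i).deriv
  have hL : pd i (fun r' => pd k μγ r') rr = g k (rr k) * (g i (rr i) * μγ rr) := by
    have hfun2 : (fun r' => pd k μγ r') = fun r' => g k (r' k) * μγ r' := funext hpdk
    rw [hfun2]
    unfold pd
    have heq : (fun s => g k (Function.update rr i s k) * μγ (Function.update rr i s))
        = fun s => g k (rr k) * μγ (Function.update rr i s) := by
      funext s
      rw [Function.update_of_ne (Ne.symm hik)]
    simp only [heq]
    exact (((key rr i).const_mul (g k (rr k)))).deriv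
  rw [hL, hpdi, hpdk rr]
  have h1 := hγ i (rr i)
  have h2 := hγ k (rr k)
  have h3 : f i (rr i) - f k (rr k) ≠ 0 := sub_ne_zero.mpr hfik
  simp only [hg]
  field_simp
  ring
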